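/- For every prime p and integers 0 ≤ a < b, the number of automorphisms of the group ℤ_{p^a} × ℤ_{p^b} equals p^{2a}·φ(p^a)·φ(p^b), and for a = b ≥ 0 it equals p^a·J₂(p^a)·φ(p^a), where J₂(n) = n²·Π_{p ∣ n}(1 - 1/p²) is the Jordan totient of order 2. -/

import Mathlib

namespace AutCount


variable {n m : ℕ}

/-- The candidate endomorphism of `ZMod n × ZMod m` sending `(1,0) ↦ x`, `(0,1) ↦ y`. -/
def psi (x y w : ZMod n × ZMod m) : ZMod n × ZMod m := w.1.val • x + w.2.val • y

lemma mod_nsmul {A : Type*} [AddCommMonoid A] {x : A} {k : ℕ} (h : k • x = 0) (j : ℕ) :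
    (j % k) • x = j • x := by
  conv_rhs => rw [← Nat.div_add_mod j k]
  rw [add_nsmul, mul_nsmul, h, smul_zero, zero_add]

lemma nsmul_self_zmod [NeZero n] (x : ZMod n) : n • x = 0 := by
  rw [nsmul_eq_mul, ZMod.natCast_self, zero_mul]

lemma nsmul_dvd_zmod (h : n ∣ m) (x : ZMod n) : m • x = 0 := by
  rw [nsmul_eq_mul, (ZMod.natCast_eq_zero_iff m n).mpr h, zero_mul]

lemma smul_tor {x : ZMod n × ZMod m} [NeZero n] (hx : n • x.2 = 0) : n • x = 0 := by
  ext
  · simp [nsmul_self_zmod]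
  · simpa using hx

lemma smul_tor' (h : n ∣ m) (y : ZMod n × ZMod m) [NeZero m] : m • y = 0 := by
  ext
  · simpa using nsmul_dvd_zmod h y.1
  · simp [nsmul_self_zmod]

lemma psi_add [NeZero n] [NeZero m] (hnm : n ∣ m) {x y : ZMod n × ZMod m}
    (hx : n • x.2 = 0) (w w' : ZMod n × ZMod m) :
    psi x y (w + w') = psi x y w + psi x y w' := by
  have hx' : n • x = 0 := smul_tor hx
  have hy' : m • y = 0 := smul_tor' hnm y
  show ((w + w').1.val) • x + ((w + w').2.val) • y = _
  have h1 : ((w + w').1.val) • x = w.1.val • x + w'.1.val • x := by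
    show ((w.1 + w'.1).val) • x = _
    rw [ZMod.val_add, mod_nsmul hx', add_nsmul]
  have h2 : ((w + w').2.val) • y = w.2.val • y + w'.2.val • y := by
    show ((w.2 + w'.2).val) • y = _
    rw [ZMod.val_add, mod_nsmul hy', add_nsmul]
  rw [h1, h2]
  unfold psi
  abel

lemma apply_eq_psi [NeZero n] [NeZero m] (f : (ZMod n × ZMod m) ≃+ (ZMod n × ZMod m))
    (w : ZMod n × ZMod m) : f w = psi (f (1, 0)) (f (0, 1)) w := by
  have hw : w = w.1.val • ((1 : ZMod n), (0 : ZMod m)) + w.2.val • ((0 : ZMod n), (1 : ZMod m)) := by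
    ext
    · simp [nsmul_eq_mul, ZMod.natCast_zmod_val]
    · simp [nsmul_eq_mul, ZMod.natCast_zmod_val]
  conv_lhs => rw [hw]
  rw [map_add, map_nsmul, map_nsmul]
  rfl

lemma psi_one_zero [NeZero n] [NeZero m] (hnm : n ∣ m) {x y : ZMod n × ZMod m}
    (hx : n • x.2 = 0) : psi x y ((1 : ZMod n), (0 : ZMod m)) = x := by
  have hx' : n • x = 0 := smul_tor hx
  show ((1 : ZMod n).val) • x + ((0 : ZMod m).val) • y = x
  rw [ZMod.val_zero, zero_nsmul, add_zero, ZMod.val_one_eq_one_mod, mod_nsmul hx', one_nsmul]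

lemma psi_zero_one [NeZero n] [NeZero m] (hnm : n ∣ m) {x y : ZMod n × ZMod m} :
    psi x y ((0 : ZMod n), (1 : ZMod m)) = y := by
  have hy' : m • y = 0 := smul_tor' hnm y
  show ((0 : ZMod n).val) • x + ((1 : ZMod m).val) • y = y
  rw [ZMod.val_zero, zero_nsmul, zero_add, ZMod.val_one_eq_one_mod, mod_nsmul hy', one_nsmul]

/-- The key equivalence: automorphisms correspond to suitable pairs of elements. -/
noncomputable def autEquivPairs [NeZero n] [NeZero m] (hnm : n ∣ m) :
    AddAut (ZMod n × ZMod m) ≃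
      {xy : (ZMod n × ZMod m) × (ZMod n × ZMod m) //
        n • xy.1.2 = 0 ∧ Function.Bijective (psi xy.1 xy.2)} where
  toFun f := ⟨((f ((1 : ZMod n), (0 : ZMod m))), (f ((0 : ZMod n), (1 : ZMod m)))), by
      have : n • ((1 : ZMod n), (0 : ZMod m)) = 0 := by
        ext <;> simp [nsmul_self_zmod]
      have h2 : n • (f ((1 : ZMod n), (0 : ZMod m))) = 0 := by
        rw [← map_nsmul, this, map_zero]
      exact congrArg Prod.snd h2, by
      have hfun : psi (f ((1 : ZMod n), (0 : ZMod m))) (f ((0 : ZMod n), (1 : ZMod m))) = ⇑f := by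
        funext w
        exact (apply_eq_psi (f : (ZMod n × ZMod m) ≃+ (ZMod n × ZMod m)) w).symm
      rw [hfun]
      exact f.bijective⟩
  invFun s := AddEquiv.mk' (Equiv.ofBijective _ s.2.2) (psi_add hnm s.2.1)
  left_inv f := by
    apply DFunLike.ext
    intro w
    exact (apply_eq_psi (f : (ZMod n × ZMod m) ≃+ (ZMod n × ZMod m)) w).symm
  right_inv s := by
    apply Subtype.ext
    ext
    · exact congrArg Prod.fst (psi_one_zero hnm s.2.1)
    · exact congrArg Prod.snd (psi_one_zero hnm s.2.1)
    · exact congrArg Prod.fst (psi_zero_one hnm)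
    · exact congrArg Prod.snd (psi_zero_one hnm)



lemma psi_apply [NeZero n] [NeZero m] (x y w : ZMod n × ZMod m) :
    psi x y w = (w.1 * x.1 + (w.2.val : ZMod n) * y.1,
      (w.1.val : ZMod m) * x.2 + w.2 * y.2) := by
  show (w.1.val • x + w.2.val • y) = _
  ext
  · simp [nsmul_eq_mul, ZMod.natCast_zmod_val]
  · simp [nsmul_eq_mul, ZMod.natCast_zmod_val]

/-- In `ZMod (p^α)` with `α ≥ 1`, a non-unit is a multiple of `p`. -/
lemma eq_p_mul_of_not_unit {p α : ℕ} (hp : p.Prime) (hα : 0 < α) {w : ZMod (p ^ α)}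
    (h : ¬IsUnit w) : ∃ c : ZMod (p ^ α), w = (p : ZMod (p ^ α)) * c := by
  haveI : NeZero (p ^ α) := ⟨pow_ne_zero α hp.ne_zero⟩
  have hw : w = ((w.val : ℕ) : ZMod (p ^ α)) := (ZMod.natCast_zmod_val w).symm
  have hnc : ¬ (w.val).Coprime (p ^ α) := fun hc => h (hw ▸ (ZMod.isUnit_iff_coprime _ _).mpr hc)
  have hdvd : p ∣ w.val := by
    by_contra hnd
    exact hnc ((Nat.coprime_pow_right_iff hα _ _).mpr
      ((Nat.Prime.coprime_iff_not_dvd hp).mpr hnd).symm)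
  obtain ⟨k, hk⟩ := hdvd
  exact ⟨(k : ZMod (p ^ α)), by rw [hw, hk]; push_cast; ring⟩

lemma not_unit_p_mul {p α : ℕ} (hp : p.Prime) (hα : 0 < α) (c : ZMod (p ^ α)) :
    ¬ IsUnit ((p : ZMod (p ^ α)) * c) := by
  intro h
  have := isUnit_of_mul_isUnit_left h
  rw [ZMod.isUnit_prime_iff_not_dvd hp] at this
  exact this (dvd_pow_self p hα.ne')

lemma unit_add_p_mul {p α : ℕ} (hp : p.Prime) {x : ZMod (p ^ α)} (hx : IsUnit x)
    (c : ZMod (p ^ α)) : IsUnit (x + (p : ZMod (p ^ α)) * c) := by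
  have hnil : IsNilpotent ((p : ZMod (p ^ α)) * c) := by
    refine ⟨α, ?_⟩
    rw [mul_pow, ← Nat.cast_pow, ZMod.natCast_self, zero_mul]
  exact (add_comm x _) ▸ hnil.isUnit_add_left_of_commute hx (Commute.all _ _)

/-- If `p^a • x₂ = 0` in `ZMod (p^b)` with `a < b`, then the cast of `x₂` to
`ZMod (p^a)` is a multiple of `p`. -/
lemma cast_tor_p_mul {p a b : ℕ} (hp : p.Prime) (hab : a < b) {x₂ : ZMod (p ^ b)}
    (h : (p ^ a) • x₂ = 0) :
    ∃ t : ZMod (p ^ a),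
      (ZMod.castHom (pow_dvd_pow p hab.le) (ZMod (p ^ a))) x₂ = (p : ZMod (p ^ a)) * t := by
  haveI : NeZero (p ^ a) := ⟨pow_ne_zero a hp.ne_zero⟩
  haveI : NeZero (p ^ b) := ⟨pow_ne_zero b hp.ne_zero⟩
  have h0 : ((p ^ a * x₂.val : ℕ) : ZMod (p ^ b)) = 0 := by
    push_cast
    rw [ZMod.natCast_zmod_val]
    rwa [nsmul_eq_mul, Nat.cast_pow] at h
  have hdvd : p ^ b ∣ p ^ a * x₂.val := (ZMod.natCast_eq_zero_iff _ _).mp h0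
  have hb : p ^ b = p ^ a * p ^ (b - a) := by
    rw [← pow_add, Nat.add_sub_cancel' hab.le]
  have hdvd2 : p ^ (b - a) ∣ x₂.val := by
    have h2 : p ^ a * p ^ (b - a) ∣ p ^ a * x₂.val := by rw [← hb]; exact hdvd
    exact (mul_dvd_mul_iff_left (a := p ^ a) (pow_ne_zero a hp.ne_zero)).mp h2
  obtain ⟨k, hk⟩ := hdvd2
  refine ⟨((p ^ (b - a - 1) * k : ℕ) : ZMod (p ^ a)), ?_⟩
  rw [ZMod.castHom_apply, ← ZMod.natCast_val, hk]
  have : p ^ (b - a) * k = p * (p ^ (b - a - 1) * k) := by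
    rw [← mul_assoc, ← pow_succ']
    congr 2
    omega
  rw [this]
  push_cast
  ring


lemma lt_bij_of_units {p a b : ℕ} (hp : p.Prime) (hab : a < b)
    {x y : ZMod (p ^ a) × ZMod (p ^ b)} (hx2 : (p ^ a) • x.2 = 0)
    (hx1 : IsUnit x.1) (hy2 : IsUnit y.2) :
    Function.Bijective (psi x y) := by
  haveI : NeZero (p ^ a) := ⟨pow_ne_zero a hp.ne_zero⟩
  haveI : NeZero (p ^ b) := ⟨pow_ne_zero b hp.ne_zero⟩
  rw [← Finite.injective_iff_bijective]
  have key : ∀ w, psi x y w = 0 → w = 0 := by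
    rintro ⟨u, v⟩ h0
    rw [psi_apply] at h0
    have h1 : u * x.1 + ((v.val : ℕ) : ZMod (p ^ a)) * y.1 = 0 := by
      simpa using congrArg Prod.fst h0
    have h2 : ((u.val : ℕ) : ZMod (p ^ b)) * x.2 + v * y.2 = 0 := by
      simpa using congrArg Prod.snd h0
    have hYs : (hy2.unit : ZMod (p ^ b)) = y.2 := hy2.unit_spec
    have hv : v = -(((u.val : ℕ) : ZMod (p ^ b)) * x.2) * (↑hy2.unit⁻¹ : ZMod (p ^ b)) := by
      have h2' : v * y.2 = -(((u.val : ℕ) : ZMod (p ^ b)) * x.2) := by linear_combination h2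
      calc v = v * (y.2 * (↑hy2.unit⁻¹ : ZMod (p ^ b))) := by
              rw [hy2.mul_val_inv, mul_one]
        _ = v * y.2 * ↑hy2.unit⁻¹ := by ring
        _ = -(((u.val : ℕ) : ZMod (p ^ b)) * x.2) * ↑hy2.unit⁻¹ := by rw [h2']
    obtain ⟨t, ht⟩ := cast_tor_p_mul hp hab hx2
    set c := ZMod.castHom (pow_dvd_pow p hab.le) (ZMod (p ^ a)) with hc
    have hVa : ((v.val : ℕ) : ZMod (p ^ a)) = c v := by
      rw [ZMod.natCast_val, ZMod.castHom_apply]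
    have hcv : c v = -(u * ((p : ZMod (p ^ a)) * t)) * c ↑hy2.unit⁻¹ := by
      rw [hv, map_mul, map_neg, map_mul, ht, map_natCast, ZMod.natCast_zmod_val]
    have hVeq : ((v.val : ℕ) : ZMod (p ^ a)) = -(u * ((p : ZMod (p ^ a)) * t)) * c ↑hy2.unit⁻¹ :=
      hVa.trans hcv
    have hu : u * (x.1 + (p : ZMod (p ^ a)) * (-(t * c ↑hy2.unit⁻¹ * y.1))) = 0 := by
      linear_combination h1 - y.1 * hVeq
    have hu0 : u = 0 :=
      ((unit_add_p_mul hp hx1 (-(t * c ↑hy2.unit⁻¹ * y.1))).mul_left_eq_zero).mp hu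
    have hv0 : v = 0 := by
      rw [hv, hu0, ZMod.val_zero]
      simp
    rw [hu0, hv0]
    rfl
  intro w w' hww
  have hsub : psi x y (w - w') = 0 := by
    have hadd := psi_add (pow_dvd_pow p hab.le) hx2 (x := x) (y := y) (w - w') w'
    rw [sub_add_cancel, hww] at hadd
    exact right_eq_add.mp hadd
  exact sub_eq_zero.mp (key _ hsub)


lemma lt_units_of_bij {p a b : ℕ} (hp : p.Prime) (hab : a < b)
    {x y : ZMod (p ^ a) × ZMod (p ^ b)} (hx2 : (p ^ a) • x.2 = 0)
    (hbij : Function.Bijective (psi x y)) : IsUnit x.1 ∧ IsUnit y.2 := by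
  haveI : NeZero (p ^ a) := ⟨pow_ne_zero a hp.ne_zero⟩
  haveI : NeZero (p ^ b) := ⟨pow_ne_zero b hp.ne_zero⟩
  have hpsi0 : psi x y ((0 : ZMod (p ^ a)), (0 : ZMod (p ^ b))) = 0 := by
    rw [psi_apply]
    simp
  have hy2 : IsUnit y.2 := by
    by_contra hne
    obtain ⟨cc, hcc⟩ := eq_p_mul_of_not_unit hp (by omega : 0 < b) hne
    have hlt : p ^ (b - 1) < p ^ b := Nat.pow_lt_pow_right hp.one_lt (by omega)
    have hv0val : ((p ^ (b - 1) : ℕ) : ZMod (p ^ b)).val = p ^ (b - 1) :=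
      ZMod.val_cast_of_lt hlt
    have hv0ne : ((p ^ (b - 1) : ℕ) : ZMod (p ^ b)) ≠ 0 := by
      intro h
      rw [h, ZMod.val_zero] at hv0val
      exact (pow_ne_zero _ hp.ne_zero) hv0val.symm
    have hker : psi x y ((0 : ZMod (p ^ a)), ((p ^ (b - 1) : ℕ) : ZMod (p ^ b))) = 0 := by
      rw [psi_apply, Prod.ext_iff]
      simp only [Prod.fst_zero, Prod.snd_zero]
      constructor
      · rw [hv0val]
        have hz : ((p ^ (b - 1) : ℕ) : ZMod (p ^ a)) = 0 :=
          (ZMod.natCast_eq_zero_iff _ _).mpr (pow_dvd_pow p (by omega))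
        rw [hz]
        simp
      · rw [ZMod.val_zero, hcc]
        have hmain : ((p ^ (b - 1) : ℕ) : ZMod (p ^ b)) * ((p : ZMod (p ^ b)) * cc) = 0 := by
          have : ((p ^ (b - 1) : ℕ) : ZMod (p ^ b)) * (p : ZMod (p ^ b)) =
              ((p ^ b : ℕ) : ZMod (p ^ b)) := by
            push_cast
            rw [← pow_succ]
            congr 1
            omega
          rw [← mul_assoc, this, ZMod.natCast_self, zero_mul]
        rw [hmain]
        simp
    have h00 := hbij.injective (hker.trans hpsi0.symm)
    exact hv0ne (congrArg Prod.snd h00)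
  refine ⟨?_, hy2⟩
  rcases Nat.eq_zero_or_pos a with ha | ha
  · haveI : Subsingleton (ZMod (p ^ a)) := by rw [ha, pow_zero]; infer_instance
    have : x.1 = 1 := Subsingleton.elim _ _
    rw [this]
    exact isUnit_one
  · by_contra hne
    obtain ⟨cc, hcc⟩ := eq_p_mul_of_not_unit hp ha hne
    have hlt : p ^ (a - 1) < p ^ a := Nat.pow_lt_pow_right hp.one_lt (by omega)
    set u0 : ZMod (p ^ a) := ((p ^ (a - 1) : ℕ) : ZMod (p ^ a)) with hu0def
    have hu0val : u0.val = p ^ (a - 1) := ZMod.val_cast_of_lt hlt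
    have hu0ne : u0 ≠ 0 := by
      intro h
      rw [h, ZMod.val_zero] at hu0val
      exact (pow_ne_zero _ hp.ne_zero) hu0val.symm
    have hinv : (↑hy2.unit⁻¹ : ZMod (p ^ b)) * y.2 = 1 := hy2.val_inv_mul
    obtain ⟨t, ht⟩ := cast_tor_p_mul hp hab hx2
    set c := ZMod.castHom (pow_dvd_pow p hab.le) (ZMod (p ^ a)) with hcdef
    set v0 : ZMod (p ^ b) :=
      -((↑hy2.unit⁻¹ : ZMod (p ^ b)) * (((u0.val : ℕ) : ZMod (p ^ b)) * x.2)) with hv0def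
    have hker : psi x y (u0, v0) = 0 := by
      rw [psi_apply, Prod.ext_iff]
      simp only [Prod.fst_zero, Prod.snd_zero]
      constructor
      · have hVa : ((v0.val : ℕ) : ZMod (p ^ a)) = c v0 := by
          rw [ZMod.natCast_val, ZMod.castHom_apply]
        have hcv : c v0 = -(c ↑hy2.unit⁻¹ * (u0 * ((p : ZMod (p ^ a)) * t))) := by
          rw [hv0def, map_neg, map_mul, map_mul, ht, map_natCast, ZMod.natCast_zmod_val]
        have hVeq : ((v0.val : ℕ) : ZMod (p ^ a)) =
            -(c ↑hy2.unit⁻¹ * (u0 * ((p : ZMod (p ^ a)) * t))) := hVa.trans hcv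
        have hpu : (p : ZMod (p ^ a)) * u0 = 0 := by
          rw [hu0def, ← Nat.cast_mul, show p * p ^ (a - 1) = p ^ a by
            rw [← pow_succ']; congr 1; omega, ZMod.natCast_self]
        linear_combination u0 * hcc + y.1 * hVeq + (cc - (c ↑hy2.unit⁻¹) * t * y.1) * hpu
      · rw [hv0def]
        linear_combination (-(((u0.val : ℕ) : ZMod (p ^ b)) * x.2)) * hinv
    have h00 := hbij.injective (hker.trans hpsi0.symm)
    exact hu0ne (congrArg Prod.fst h00)



noncomputable def unitsSubtypeEquiv (R : Type*) [Monoid R] : Rˣ ≃ {w : R // IsUnit w} where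
  toFun u := ⟨u, u.isUnit⟩
  invFun w := w.2.unit
  left_inv u := Units.ext u.isUnit.unit_spec
  right_inv w := Subtype.ext w.2.unit_spec

lemma card_isUnit (k : ℕ) [NeZero k] : Nat.card {w : ZMod k // IsUnit w} = k.totient := by
  rw [← Nat.card_congr (unitsSubtypeEquiv (ZMod k)), Nat.card_eq_fintype_card,
    ZMod.card_units_eq_totient]

lemma card_not_isUnit (k : ℕ) [NeZero k] :
    Nat.card {w : ZMod k // ¬ IsUnit w} = k - k.totient := by
  classical
  rw [Nat.card_eq_fintype_card, Fintype.card_subtype_compl,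
    ← Nat.card_eq_fintype_card (α := ZMod k), Nat.card_zmod,
    ← Nat.card_eq_fintype_card (α := {w : ZMod k // IsUnit w}), card_isUnit]

lemma card_torsion {n m : ℕ} [NeZero n] [NeZero m] (h : n ∣ m) :
    Nat.card {c : ZMod m // n • c = 0} = n := by
  have hn : 0 < n := Nat.pos_of_ne_zero (NeZero.ne n)
  have hm : 0 < m := Nat.pos_of_ne_zero (NeZero.ne m)
  have hd : 0 < m / n := Nat.div_pos (Nat.le_of_dvd hm h) hn
  set f : ZMod n → {c : ZMod m // n • c = 0} := fun γ =>
    ⟨(((m / n) * γ.val : ℕ) : ZMod m), by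
      rw [nsmul_eq_mul, ← Nat.cast_mul, ← mul_assoc, Nat.mul_div_cancel' h, Nat.cast_mul,
        ZMod.natCast_self, zero_mul]⟩ with hf
  have hinj : Function.Injective f := by
    intro γ γ' hg
    have hval := congrArg Subtype.val hg
    simp only [hf] at hval
    have hmod := (ZMod.natCast_eq_natCast_iff _ _ _).mp hval
    have hmod2 : (m / n) * γ.val ≡ (m / n) * γ'.val [MOD (m / n) * n] := by
      rw [Nat.div_mul_cancel h]; exact hmod
    have := Nat.ModEq.mul_left_cancel' hd.ne' hmod2
    have hcast : ((γ.val : ℕ) : ZMod n) = ((γ'.val : ℕ) : ZMod n) :=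
      (ZMod.natCast_eq_natCast_iff _ _ _).mpr this
    rwa [ZMod.natCast_zmod_val, ZMod.natCast_zmod_val] at hcast
  have hsurj : Function.Surjective f := by
    rintro ⟨cv, hc⟩
    have h0 : ((n * cv.val : ℕ) : ZMod m) = 0 := by
      rw [Nat.cast_mul, ZMod.natCast_zmod_val]
      rwa [nsmul_eq_mul] at hc
    obtain ⟨kk, hk⟩ := (ZMod.natCast_eq_zero_iff _ _).mp h0
    have hcv : cv.val = (m / n) * kk := by
      have hmn : n * (m / n) = m := Nat.mul_div_cancel' h
      apply Nat.eq_of_mul_eq_mul_left hn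
      rw [hk, ← mul_assoc, hmn]
    refine ⟨((kk : ℕ) : ZMod n), Subtype.ext ?_⟩
    have hγval : (((kk : ℕ) : ZMod n)).val = kk % n := ZMod.val_natCast n kk
    simp only [hf, hγval]
    have hmeq : (m / n) * (kk % n) ≡ (m / n) * kk [MOD m] := by
      have := Nat.ModEq.mul_left' (c := m / n) (Nat.mod_modEq kk n)
      rwa [Nat.div_mul_cancel h] at this
    calc (((m / n) * (kk % n) : ℕ) : ZMod m) = (((m / n) * kk : ℕ) : ZMod m) :=
          (ZMod.natCast_eq_natCast_iff _ _ _).mpr hmeq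
      _ = cv := by rw [← hcv, ZMod.natCast_zmod_val]
  have : Nat.card (ZMod n) = Nat.card {c : ZMod m // n • c = 0} :=
    Nat.card_congr (Equiv.ofBijective f ⟨hinj, hsurj⟩)
  rw [← this, Nat.card_zmod]

/-- Repackaging of quadruples with conditions on three slots. -/
def quadEquiv {A B C D : Type*} {P : A → Prop} {Q : B → Prop} {R : D → Prop} :
    {xy : (A × B) × (C × D) // P xy.1.1 ∧ Q xy.1.2 ∧ R xy.2.2} ≃
      ({a // P a} × {b // Q b}) × (C × {d // R d}) where
  toFun s := ((⟨s.1.1.1, s.2.1⟩, ⟨s.1.1.2, s.2.2.1⟩), (s.1.2.1, ⟨s.1.2.2, s.2.2.2⟩))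
  invFun t := ⟨((t.1.1.1, t.1.2.1), (t.2.1, t.2.2.1)), t.1.1.2, t.1.2.2, t.2.2.2⟩
  left_inv s := rfl
  right_inv t := rfl


lemma eq_psi_apply [NeZero n] (x y w : ZMod n × ZMod n) :
    psi x y w = (w.1 * x.1 + w.2 * y.1, w.1 * x.2 + w.2 * y.2) := by
  rw [psi_apply, ZMod.natCast_zmod_val, ZMod.natCast_zmod_val]

lemma eq_bij_iff_det [NeZero n] (x y : ZMod n × ZMod n) :
    Function.Bijective (psi x y) ↔ IsUnit (x.1 * y.2 - y.1 * x.2) := by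
  constructor
  · intro hbij
    obtain ⟨w, hw⟩ := hbij.surjective ((1 : ZMod n), (0 : ZMod n))
    obtain ⟨w', hw'⟩ := hbij.surjective ((0 : ZMod n), (1 : ZMod n))
    rw [eq_psi_apply, Prod.ext_iff] at hw hw'
    obtain ⟨h1, h2⟩ := hw
    obtain ⟨h3, h4⟩ := hw'
    refine IsUnit.of_mul_eq_one (w.1 * w'.2 - w'.1 * w.2) ?_
    linear_combination (w'.1 * x.2 + w'.2 * y.2) * h1 + h4 - (w.1 * x.2 + w.2 * y.2) * h3
  · intro hdet
    rw [← Finite.injective_iff_bijective]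
    have key : ∀ w, psi x y w = 0 → w = 0 := by
      rintro ⟨u, v⟩ h0
      rw [eq_psi_apply] at h0
      have h1 : u * x.1 + v * y.1 = 0 := by simpa using congrArg Prod.fst h0
      have h2 : u * x.2 + v * y.2 = 0 := by simpa using congrArg Prod.snd h0
      have hu : u * (x.1 * y.2 - y.1 * x.2) = 0 := by linear_combination y.2 * h1 - y.1 * h2
      have hv : v * (x.1 * y.2 - y.1 * x.2) = 0 := by linear_combination x.1 * h2 - x.2 * h1
      have hu0 : u = 0 := (hdet.mul_left_eq_zero).mp hu
      have hv0 : v = 0 := (hdet.mul_left_eq_zero).mp hv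
      rw [hu0, hv0]
      rfl
    intro w w' hww
    have hadd := psi_add (dvd_refl n) (x := x) (y := y)
      (by rw [nsmul_eq_mul, ZMod.natCast_self, zero_mul]) (w - w') w'
    rw [sub_add_cancel, hww] at hadd
    exact sub_eq_zero.mp (key _ (right_eq_add.mp hadd))

lemma unimod_of_det {p α : ℕ} (hp : p.Prime) (hα : 0 < α)
    {x y : ZMod (p ^ α) × ZMod (p ^ α)} (h : IsUnit (x.1 * y.2 - y.1 * x.2)) :
    IsUnit x.1 ∨ IsUnit x.2 := by
  by_contra hc
  push_neg at hc
  obtain ⟨c1, hc1⟩ := eq_p_mul_of_not_unit hp hα hc.1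
  obtain ⟨c2, hc2⟩ := eq_p_mul_of_not_unit hp hα hc.2
  have : x.1 * y.2 - y.1 * x.2 = (p : ZMod (p ^ α)) * (c1 * y.2 - y.1 * c2) := by
    rw [hc1, hc2]; ring
  rw [this] at h
  exact not_unit_p_mul hp hα _ h

/-- Fiber equivalence: for a fixed "unimodular" first column `x`, the second columns giving a
unit determinant are parametrized by `ZMod n × (ZMod n)ˣ`. -/
noncomputable def fiberEquiv [NeZero n] (x : ZMod n × ZMod n) (hx : IsUnit x.1 ∨ IsUnit x.2) :
    {y : ZMod n × ZMod n // IsUnit (x.1 * y.2 - y.1 * x.2)} ≃ ZMod n × (ZMod n)ˣ := by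
  classical
  by_cases h : IsUnit x.1
  · exact
    { toFun := fun y => (y.1.1, y.2.unit)
      invFun := fun cu =>
        ⟨(cu.1, (↑h.unit⁻¹ : ZMod n) * (↑cu.2 + cu.1 * x.2)), by
          have key : x.1 * ((↑h.unit⁻¹ : ZMod n) * (↑cu.2 + cu.1 * x.2)) - cu.1 * x.2
              = ↑cu.2 := by
            have h1 : x.1 * (↑h.unit⁻¹ : ZMod n) = 1 := h.mul_val_inv
            linear_combination (↑cu.2 + cu.1 * x.2) * h1
          rw [key]
          exact cu.2.isUnit⟩
      left_inv := fun y => by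
        apply Subtype.ext
        have hspec : (y.2.unit : ZMod n) = x.1 * y.1.2 - y.1.1 * x.2 := y.2.unit_spec
        apply Prod.ext
        · rfl
        · show (↑h.unit⁻¹ : ZMod n) * (↑y.2.unit + y.1.1 * x.2) = y.1.2
          have h1 : (↑h.unit⁻¹ : ZMod n) * x.1 = 1 := h.val_inv_mul
          rw [hspec]
          linear_combination y.1.2 * h1
      right_inv := fun cu => by
        apply Prod.ext
        · rfl
        · apply Units.ext
          show (x.1 * ((↑h.unit⁻¹ : ZMod n) * (↑cu.2 + cu.1 * x.2)) - cu.1 * x.2 : ZMod n)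
            = ↑cu.2
          have h1 : x.1 * (↑h.unit⁻¹ : ZMod n) = 1 := h.mul_val_inv
          linear_combination (↑cu.2 + cu.1 * x.2) * h1 }
  · have h2 : IsUnit x.2 := hx.resolve_left h
    exact
    { toFun := fun y => (y.1.2, y.2.unit)
      invFun := fun cu =>
        ⟨((↑h2.unit⁻¹ : ZMod n) * (x.1 * cu.1 - ↑cu.2), cu.1), by
          have key : x.1 * cu.1 - (↑h2.unit⁻¹ : ZMod n) * (x.1 * cu.1 - ↑cu.2) * x.2
              = ↑cu.2 := by
            have h1 : (↑h2.unit⁻¹ : ZMod n) * x.2 = 1 := h2.val_inv_mul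
            linear_combination (↑cu.2 - x.1 * cu.1) * h1
          rw [key]
          exact cu.2.isUnit⟩
      left_inv := fun y => by
        apply Subtype.ext
        have hspec : (y.2.unit : ZMod n) = x.1 * y.1.2 - y.1.1 * x.2 := y.2.unit_spec
        apply Prod.ext
        · show (↑h2.unit⁻¹ : ZMod n) * (x.1 * y.1.2 - ↑y.2.unit) = y.1.1
          have h1 : (↑h2.unit⁻¹ : ZMod n) * x.2 = 1 := h2.val_inv_mul
          rw [hspec]
          linear_combination y.1.1 * h1
        · rfl
      right_inv := fun cu => by
        apply Prod.ext
        · rfl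
        · apply Units.ext
          show (x.1 * cu.1 - (↑h2.unit⁻¹ : ZMod n) * (x.1 * cu.1 - ↑cu.2) * x.2 : ZMod n)
            = ↑cu.2
          have h1 : (↑h2.unit⁻¹ : ZMod n) * x.2 = 1 := h2.val_inv_mul
          linear_combination (↑cu.2 - x.1 * cu.1) * h1 }


def prodSubtypeEquiv {A B : Type*} {P : A → Prop} {Q : B → Prop} :
    {x : A × B // P x.1 ∧ Q x.2} ≃ {a // P a} × {b // Q b} where
  toFun s := (⟨s.1.1, s.2.1⟩, ⟨s.1.2, s.2.2⟩)
  invFun t := ⟨(t.1.1, t.2.1), t.1.2, t.2.2⟩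
  left_inv s := rfl
  right_inv t := rfl

noncomputable def detEquivSigma {p α : ℕ} (hp : p.Prime) (hα : 0 < α) :
    {xy : (ZMod (p ^ α) × ZMod (p ^ α)) × (ZMod (p ^ α) × ZMod (p ^ α)) //
        IsUnit (xy.1.1 * xy.2.2 - xy.2.1 * xy.1.2)} ≃
      Σ x : {x : ZMod (p ^ α) × ZMod (p ^ α) // IsUnit x.1 ∨ IsUnit x.2},
        {y : ZMod (p ^ α) × ZMod (p ^ α) // IsUnit (x.1.1 * y.2 - y.1 * x.1.2)} where
  toFun t := ⟨⟨t.1.1, unimod_of_det hp hα t.2⟩, ⟨t.1.2, t.2⟩⟩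
  invFun s := ⟨(s.1.1, s.2.1), s.2.2⟩
  left_inv t := rfl
  right_inv s := rfl

lemma card_unimod {p α : ℕ} (hp : p.Prime) (hα : 0 < α) :
    Nat.card {x : ZMod (p ^ α) × ZMod (p ^ α) // IsUnit x.1 ∨ IsUnit x.2} =
      (p ^ α) ^ 2 - (p ^ α - (p ^ α).totient) ^ 2 := by
  classical
  haveI : NeZero (p ^ α) := ⟨pow_ne_zero α hp.ne_zero⟩
  have hcompl :
      Nat.card {x : ZMod (p ^ α) × ZMod (p ^ α) // ¬(IsUnit x.1 ∨ IsUnit x.2)} =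
        (p ^ α - (p ^ α).totient) ^ 2 := by
    have e1 : {x : ZMod (p ^ α) × ZMod (p ^ α) // ¬(IsUnit x.1 ∨ IsUnit x.2)} ≃
        {x : ZMod (p ^ α) × ZMod (p ^ α) // ¬IsUnit x.1 ∧ ¬IsUnit x.2} :=
      Equiv.subtypeEquivRight fun x => by tauto
    rw [Nat.card_congr (e1.trans (prodSubtypeEquiv (P := fun a : ZMod (p ^ α) => ¬IsUnit a) (Q := fun b : ZMod (p ^ α) => ¬IsUnit b))), Nat.card_prod, card_not_isUnit, sq]
  have hle : Nat.card {x : ZMod (p ^ α) × ZMod (p ^ α) // IsUnit x.1 ∨ IsUnit x.2} ≤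
      Nat.card (ZMod (p ^ α) × ZMod (p ^ α)) := by
    rw [Nat.card_eq_fintype_card, Nat.card_eq_fintype_card]
    exact Fintype.card_subtype_le _
  have htot : Nat.card (ZMod (p ^ α) × ZMod (p ^ α)) = (p ^ α) ^ 2 := by
    rw [Nat.card_prod, Nat.card_zmod, sq]
  have hsub := Fintype.card_subtype_compl (fun x : ZMod (p ^ α) × ZMod (p ^ α) =>
    IsUnit x.1 ∨ IsUnit x.2)
  rw [← Nat.card_eq_fintype_card, ← Nat.card_eq_fintype_card,
    ← Nat.card_eq_fintype_card] at hsub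
  rw [hcompl, htot] at hsub
  rw [htot] at hle
  omega

lemma card_det {p α : ℕ} (hp : p.Prime) (hα : 0 < α) :
    Nat.card {xy : (ZMod (p ^ α) × ZMod (p ^ α)) × (ZMod (p ^ α) × ZMod (p ^ α)) //
        IsUnit (xy.1.1 * xy.2.2 - xy.2.1 * xy.1.2)} =
      ((p ^ α) ^ 2 - (p ^ α - (p ^ α).totient) ^ 2) * (p ^ α * (p ^ α).totient) := by
  haveI : NeZero (p ^ α) := ⟨pow_ne_zero α hp.ne_zero⟩
  rw [Nat.card_congr ((detEquivSigma hp hα).trans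
    ((Equiv.sigmaCongrRight (fun x : {x : ZMod (p ^ α) × ZMod (p ^ α) //
        IsUnit x.1 ∨ IsUnit x.2} => fiberEquiv x.1 x.2)).trans
      (Equiv.sigmaEquivProd _ _)))]
  rw [Nat.card_prod, Nat.card_prod, Nat.card_zmod, card_unimod hp hα,
    Nat.card_eq_fintype_card (α := (ZMod (p ^ α))ˣ), ZMod.card_units_eq_totient]


end AutCount

theorem automorphism_count_prime_powers (p : ℕ) (hp : p.Prime) (a b : ℕ) :
    (a < b →
      Nat.card (AddAut (ZMod (p ^ a) × ZMod (p ^ b))) =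
        p ^ (2 * a) * Nat.totient (p ^ a) * Nat.totient (p ^ b)) ∧
    (a = b →
      (Nat.card (AddAut (ZMod (p ^ a) × ZMod (p ^ b))) : ℚ) =
        (p : ℚ) ^ a *
          (((p : ℚ) ^ a) ^ 2 * ∏ q ∈ (p ^ a).primeFactors, (1 - 1 / (q : ℚ) ^ 2)) *
          (Nat.totient (p ^ a) : ℚ)) := by
  haveI : NeZero (p ^ a) := ⟨pow_ne_zero a hp.ne_zero⟩
  haveI : NeZero (p ^ b) := ⟨pow_ne_zero b hp.ne_zero⟩
  constructor
  · -- case a < b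
    intro hab
    have hdvd : p ^ a ∣ p ^ b := pow_dvd_pow p hab.le
    rw [Nat.card_congr (AutCount.autEquivPairs hdvd)]
    have e2 : {xy : (ZMod (p ^ a) × ZMod (p ^ b)) × (ZMod (p ^ a) × ZMod (p ^ b)) //
        (p ^ a) • xy.1.2 = 0 ∧ Function.Bijective (AutCount.psi xy.1 xy.2)} ≃
        {xy : (ZMod (p ^ a) × ZMod (p ^ b)) × (ZMod (p ^ a) × ZMod (p ^ b)) //
        IsUnit xy.1.1 ∧ ((p ^ a) • xy.1.2 = 0 ∧ IsUnit xy.2.2)} := by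
      refine Equiv.subtypeEquivRight fun xy => ⟨?_, ?_⟩
      · rintro ⟨h1, h2⟩
        obtain ⟨hu1, hu2⟩ := AutCount.lt_units_of_bij hp hab h1 h2
        exact ⟨hu1, h1, hu2⟩
      · rintro ⟨h1, h2, h3⟩
        exact ⟨h2, AutCount.lt_bij_of_units hp hab h2 h1 h3⟩
    rw [Nat.card_congr (e2.trans (AutCount.quadEquiv
      (P := fun w : ZMod (p ^ a) => IsUnit w)
      (Q := fun w : ZMod (p ^ b) => (p ^ a) • w = 0)
      (R := fun w : ZMod (p ^ b) => IsUnit w)))]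
    rw [Nat.card_prod, Nat.card_prod, Nat.card_prod, AutCount.card_isUnit,
      AutCount.card_isUnit, AutCount.card_torsion hdvd, Nat.card_zmod, two_mul, pow_add]
    ring
  · -- case a = b
    intro hab
    subst hab
    rcases Nat.eq_zero_or_pos a with ha | ha
    · subst ha
      haveI : Subsingleton (ZMod (p ^ 0) × ZMod (p ^ 0)) := by
        rw [pow_zero]; infer_instance
      haveI : Subsingleton (AddAut (ZMod (p ^ 0) × ZMod (p ^ 0))) :=
        ⟨fun f g => AddEquiv.ext fun x => Subsingleton.elim _ _⟩
      haveI : Nonempty (AddAut (ZMod (p ^ 0) × ZMod (p ^ 0))) := ⟨AddEquiv.refl _⟩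
      rw [Nat.card_unique]
      simp
    · obtain ⟨a', rfl⟩ : ∃ a', a = a' + 1 := ⟨a - 1, by omega⟩
      rw [Nat.card_congr (AutCount.autEquivPairs (dvd_refl (p ^ (a' + 1))))]
      have e2 : {xy : (ZMod (p ^ (a' + 1)) × ZMod (p ^ (a' + 1))) ×
            (ZMod (p ^ (a' + 1)) × ZMod (p ^ (a' + 1))) //
          (p ^ (a' + 1)) • xy.1.2 = 0 ∧ Function.Bijective (AutCount.psi xy.1 xy.2)} ≃
          {xy : (ZMod (p ^ (a' + 1)) × ZMod (p ^ (a' + 1))) ×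
            (ZMod (p ^ (a' + 1)) × ZMod (p ^ (a' + 1))) //
          IsUnit (xy.1.1 * xy.2.2 - xy.2.1 * xy.1.2)} := by
        refine Equiv.subtypeEquivRight fun xy => ?_
        rw [AutCount.eq_bij_iff_det]
        have htor : (p ^ (a' + 1)) • xy.1.2 = 0 := by
          rw [nsmul_eq_mul, ZMod.natCast_self, zero_mul]
        tauto
      rw [Nat.card_congr e2, AutCount.card_det hp ha]
      -- numerics
      have hφ : (p ^ (a' + 1)).totient = p ^ a' * (p - 1) :=
        Nat.totient_prime_pow hp (Nat.succ_pos a')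
      have hsub : p ^ (a' + 1) - (p ^ (a' + 1)).totient = p ^ a' := by
        rw [hφ, pow_succ, Nat.mul_sub, mul_one,
          Nat.sub_sub_self (Nat.le_mul_of_pos_right _ hp.pos)]
      rw [hsub]
      rw [Nat.primeFactors_prime_pow (Nat.succ_ne_zero a') hp, Finset.prod_singleton]
      have hle : (p ^ a') ^ 2 ≤ (p ^ (a' + 1)) ^ 2 :=
        Nat.pow_le_pow_left (Nat.pow_le_pow_right hp.pos (by omega)) 2
      have hP : (p : ℚ) ≠ 0 := Nat.cast_ne_zero.mpr hp.ne_zero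
      rw [Nat.cast_mul, Nat.cast_sub hle]
      push_cast
      field_simp
      ring
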